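/- Let G be a finite group, H a normal subgroup with G/H cyclic of order n, and Λ an algebraically closed field whose characteristic does not divide n. Let M be a finite-dimensional Λ[G]-module which admits no quotient with trivial G-action, but whose restriction to H admits a surjective H-map onto the trivial H-module Λ. Then M admits a surjective G-map onto some one-dimensional representation of G which is inflated from a nontrivial character of G/H. -/

import Mathlib

set_option synthInstance.maxHeartbeats 1000000
set_option maxHeartbeats 2000000

/-- Let `G` be a finite group, `H ⊴ G` with `G ⧸ H` cyclic of order `n`, and `Λ` an
algebraically closed field whose characteristic does not divide `n`.  If a
finite-dimensional `Λ[G]`-module `M` admits no quotient with trivial `G`-action, but its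
restriction to `H` surjects `H`-equivariantly onto the trivial module `Λ`, then `M`
surjects `G`-equivariantly onto a one-dimensional representation inflated from a
nontrivial character of `G ⧸ H`. -/
theorem exists_nontrivial_character_quotient
    {G : Type*} [Group G] [Finite G] (H : Subgroup G) [H.Normal]
    {Λ : Type*} [Field Λ] [IsAlgClosed Λ] (n : ℕ)
    (hcyc : IsCyclic (G ⧸ H)) (hn : Nat.card (G ⧸ H) = n)
    (hchar : ¬ (ringChar Λ ∣ n))
    {M : Type*} [AddCommGroup M] [Module Λ M] [FiniteDimensional Λ M]
    (ρ : Representation Λ G M)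
    (hno : ¬ ∃ φ : M →ₗ[Λ] Λ, Function.Surjective φ ∧
      ∀ (g : G) (m : M), φ (ρ g m) = φ m)
    (hres : ∃ ψ : M →ₗ[Λ] Λ, Function.Surjective ψ ∧
      ∀ (h : H) (m : M), ψ (ρ (h : G) m) = ψ m) :
    ∃ χ : (G ⧸ H) →* Λˣ, χ ≠ 1 ∧ ∃ φ : M →ₗ[Λ] Λ, Function.Surjective φ ∧
      ∀ (g : G) (m : M), φ (ρ g m) = (χ (QuotientGroup.mk g) : Λ) * φ m := by
  classical
  obtain ⟨ψ, hψs, hψH⟩ := hres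
  have hnΛ : (n : Λ) ≠ 0 := fun h =>
    hchar ((CharP.cast_eq_zero_iff Λ (ringChar Λ) n).mp h)
  obtain ⟨σ, hσ⟩ := hcyc.exists_generator
  obtain ⟨g₀, hg₀⟩ := QuotientGroup.mk_surjective σ
  have hg₀n : g₀ ^ n ∈ H := by
    rw [← QuotientGroup.eq_one_iff]
    have : ((g₀ ^ n : G) : G ⧸ H) = (g₀ : G ⧸ H) ^ n := by
      exact (QuotientGroup.mk' H).map_pow g₀ n
    rw [this, ← hn]
    exact pow_card_eq_one'
  -- the submodule of `H`-invariant functionals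
  let V : Submodule Λ (M →ₗ[Λ] Λ) :=
    { carrier := {φ | ∀ h : H, ∀ m : M, φ (ρ (h : G) m) = φ m}
      add_mem' := fun {a b} ha hb h m => by
        simp only [LinearMap.add_apply, ha h m, hb h m]
      zero_mem' := fun h m => rfl
      smul_mem' := fun c φ hφ h m => by
        simp only [LinearMap.smul_apply, hφ h m] }
  have hψV : ψ ∈ V := hψH
  have memV_comp : ∀ φ : M →ₗ[Λ] Λ, φ ∈ V → φ.comp (ρ g₀) ∈ V := by
    intro φ hφ h m
    have hh : g₀ * (h : G) * g₀⁻¹ ∈ H :=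
      (inferInstance : H.Normal).conj_mem (h : G) h.2 g₀
    have : ρ g₀ (ρ (h : G) m) = ρ (g₀ * (h : G) * g₀⁻¹) (ρ g₀ m) := by
      rw [← Module.End.mul_apply, ← map_mul, ← Module.End.mul_apply, ← map_mul]
      group
    simp only [LinearMap.comp_apply, this, hφ ⟨_, hh⟩ (ρ g₀ m)]
  -- the operator induced by `g₀` on `V`
  let T : Module.End Λ V :=
    { toFun := fun φ => ⟨(φ : M →ₗ[Λ] Λ).comp (ρ g₀), memV_comp _ φ.2⟩
      map_add' := fun a b => by
        ext m; simp [LinearMap.add_comp]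
      map_smul' := fun c a => by
        ext m; simp [LinearMap.smul_comp] }
  have hTapply : ∀ (φ : V) (m : M), ((T φ : V) : M →ₗ[Λ] Λ) m = (φ : M →ₗ[Λ] Λ) (ρ g₀ m) :=
    fun φ m => rfl
  have hTpow : ∀ (k : ℕ) (φ : V) (m : M),
      (((T ^ k) φ : V) : M →ₗ[Λ] Λ) m = (φ : M →ₗ[Λ] Λ) (ρ (g₀ ^ k) m) := by
    intro k
    induction k with
    | zero => intro φ m; simp
    | succ k ih =>
      intro φ m
      have h1 : (T ^ (k + 1)) φ = (T ^ k) (T φ) := by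
        rw [pow_succ]; rfl
      rw [h1, ih (T φ) m, hTapply]
      congr 1
      rw [pow_succ', map_mul, Module.End.mul_apply]
  have hTn : ∀ φ : V, (T ^ n) φ = φ := by
    intro φ
    apply Subtype.ext
    apply LinearMap.ext
    intro m
    rw [hTpow n φ m]
    exact φ.2 ⟨g₀ ^ n, hg₀n⟩ m
  -- main computation: from the action of `g₀`, deduce the action of every `g`
  have main : ∀ (φ : M →ₗ[Λ] Λ), φ ∈ V → ∀ (μ : Λˣ),
      (∀ m, φ (ρ g₀ m) = (μ : Λ) * φ m) →
      ∀ g : G, ∃ k : ℤ, ∀ m, φ (ρ g m) = ((μ ^ k : Λˣ) : Λ) * φ m := by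
    intro φ hφ μ hμ g
    obtain ⟨k, hk⟩ := Subgroup.mem_zpowers_iff.mp (hσ (QuotientGroup.mk g))
    refine ⟨k, ?_⟩
    have claimN : ∀ (j : ℕ) (m : M), φ (ρ (g₀ ^ j) m) = (μ : Λ) ^ j * φ m := by
      intro j
      induction j with
      | zero => intro m; simp
      | succ j ih =>
        intro m
        rw [pow_succ', map_mul, Module.End.mul_apply, hμ, ih, pow_succ', mul_assoc]
    have claimZ : ∀ (j : ℤ) (m : M), φ (ρ (g₀ ^ j) m) = ((μ ^ j : Λˣ) : Λ) * φ m := by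
      intro j m
      obtain ⟨j', hj' | hj'⟩ := j.eq_nat_or_neg
      · subst hj'
        rw [zpow_natCast, claimN]
        norm_cast
      · subst hj'
        have h1 : (g₀ ^ (-(j' : ℤ))) = (g₀ ^ j')⁻¹ := by
          rw [zpow_neg, zpow_natCast]
        rw [h1]
        have h2 : φ (ρ (g₀ ^ j') (ρ (g₀ ^ j')⁻¹ m)) = (μ : Λ) ^ j' * φ (ρ (g₀ ^ j')⁻¹ m) :=
          claimN j' _
        rw [← Module.End.mul_apply, ← map_mul, mul_inv_cancel, map_one,
          Module.End.one_apply] at h2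
        have hμ0 : ((μ : Λ) ^ j') ≠ 0 := pow_ne_zero _ μ.ne_zero
        have h3 : ((μ ^ (-(j' : ℤ)) : Λˣ) : Λ) = ((μ : Λ) ^ j')⁻¹ := by
          rw [zpow_neg, zpow_natCast]
          rw [← Units.val_pow_eq_pow_val]
          exact (Units.val_inv_eq_inv_val _)
        rw [h3, h2, inv_mul_cancel_left₀ hμ0]
    -- decompose g = g₀ ^ k * h
    have hmkeq : (QuotientGroup.mk (g₀ ^ k) : G ⧸ H) = QuotientGroup.mk g := by
      rw [← hk, ← hg₀]
      exact ((QuotientGroup.mk' H).map_zpow g₀ k).symm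
    have hhH : (g₀ ^ k)⁻¹ * g ∈ H := QuotientGroup.eq.mp hmkeq
    intro m
    have hgdecomp : g = g₀ ^ k * ((g₀ ^ k)⁻¹ * g) := by group
    rw [hgdecomp, map_mul, Module.End.mul_apply, claimZ, hφ ⟨_, hhH⟩ m]
  -- ψ is a nonzero element of V
  have hψ0 : ψ ≠ 0 := by
    intro h
    obtain ⟨m, hm⟩ := hψs 1
    rw [h] at hm
    simp only [LinearMap.zero_apply] at hm
    exact one_ne_zero hm.symm
  rcases eq_or_ne T 1 with hT1 | hT1
  · exfalso
    apply hno
    refine ⟨ψ, hψs, ?_⟩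
    intro g m
    have hstep : ∀ m, ψ (ρ g₀ m) = ((1 : Λˣ) : Λ) * ψ m := by
      intro m
      have := congrArg (fun x : V => ((x : V) : M →ₗ[Λ] Λ) m) (congrFun (congrArg (fun f : Module.End Λ V => (f : V → V)) hT1) ⟨ψ, hψV⟩)
      simp only [Module.End.one_apply] at this
      rw [← hTapply ⟨ψ, hψV⟩ m]
      simpa using this
    obtain ⟨k, hk⟩ := main ψ hψV 1 hstep g
    simpa using hk m
  · -- there is an eigenvector with eigenvalue ≠ 1
    letI : AddCommGroup (M →ₗ[Λ] Λ) := LinearMap.addCommGroup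
    have hW : LinearMap.range (T - 1 : Module.End Λ V) ≠ ⊥ := by
      intro h
      apply hT1
      apply sub_eq_zero.mp
      apply LinearMap.range_eq_bot.mp h
    have : Nontrivial (LinearMap.range (T - 1 : Module.End Λ V)) :=
      Submodule.nontrivial_iff_ne_bot.mpr hW
    have hTW : ∀ x ∈ LinearMap.range (T - 1 : Module.End Λ V), T x ∈ LinearMap.range (T - 1 : Module.End Λ V) := by
      rintro x ⟨u, rfl⟩
      refine ⟨T u, ?_⟩
      show (T - 1) (T u) = T ((T - 1) u)
      simp only [LinearMap.sub_apply, Module.End.one_apply, map_sub]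
    haveI : FiniteDimensional Λ (LinearMap.range (T - 1 : Module.End Λ V)) := inferInstance
    let Tres : Module.End Λ (LinearMap.range (T - 1 : Module.End Λ V)) := T.restrict hTW
    obtain ⟨μ₀, hμ₀⟩ :=
      Module.End.exists_eigenvalue (K := Λ) (V := ↥(LinearMap.range (T - 1 : Module.End Λ V))) Tres
    obtain ⟨v, hv⟩ := hμ₀.exists_hasEigenvector
    have hv0 : (v : V) ≠ 0 := fun h => hv.2 (Subtype.ext h)
    have hTv : T (v : V) = μ₀ • (v : V) := by
      have := hv.1
      have h2 := congrArg (Subtype.val) (Module.End.mem_eigenspace_iff.mp this)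
      exact h2
    -- μ₀ ^ n = 1
    have hTpowv : ∀ j : ℕ, (T ^ j) (v : V) = (μ₀ ^ j) • (v : V) := by
      intro j
      induction j with
      | zero => simp
      | succ j ih =>
        have h1 : (T ^ (j + 1)) (v : V) = (T ^ j) (T (v : V)) := by
          rw [pow_succ]; rfl
        rw [h1, hTv, map_smul, ih, pow_succ, mul_comm (μ₀ ^ j), mul_smul]
    have hμn : μ₀ ^ n = 1 := by
      have h1 := hTn (v : V)
      rw [hTpowv n] at h1
      have hcancel : (fun c : Λ => c • ((v : V) : V)) (μ₀ ^ n) = (fun c : Λ => c • ((v : V) : V)) 1 := by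
        simp only [one_smul, h1]
      exact smul_left_injective Λ hv0 hcancel
    have hn0 : n ≠ 0 := fun h => hnΛ (by rw [h]; simp)
    -- μ₀ ≠ 1
    have hμ1 : μ₀ ≠ 1 := by
      intro heq
      obtain ⟨u, hu⟩ := v.2
      have h1 : (∑ i ∈ Finset.range n, T ^ i) ((v : V)) = 0 := by
        rw [← hu, LinearMap.sum_apply]
        have hterm : ∀ i, (T ^ i) ((T - 1) u) = (T ^ (i + 1)) u - (T ^ i) u := by
          intro i
          have hTu : (T - 1) u = T u - u := rfl
          rw [hTu, map_sub]
          congr 1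
        calc ∑ i ∈ Finset.range n, (T ^ i) ((T - 1) u)
            = ∑ i ∈ Finset.range n, ((T ^ (i + 1)) u - (T ^ i) u) :=
              Finset.sum_congr rfl fun i _ => hterm i
          _ = (T ^ n) u - (T ^ 0) u := Finset.sum_range_sub (fun i => (T ^ i) u) n
          _ = 0 := by rw [hTn, pow_zero, Module.End.one_apply, sub_self]
      have h2 : (∑ i ∈ Finset.range n, T ^ i) ((v : V)) = (n : Λ) • ((v : V) : V) := by
        rw [LinearMap.sum_apply]
        have : ∀ i ∈ Finset.range n, (T ^ i) ((v : V)) = ((v : V) : V) := by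
          intro i _
          rw [hTpowv i, heq, one_pow, one_smul]
        rw [Finset.sum_congr rfl this, Finset.sum_const, Finset.card_range,
          Nat.cast_smul_eq_nsmul]
      rw [h2] at h1
      rcases smul_eq_zero.mp h1 with h | h
      · exact hnΛ h
      · exact hv0 h
    have hμ0 : μ₀ ≠ 0 := by
      intro h
      rw [h, zero_pow hn0] at hμn
      exact zero_ne_one hμn
    -- make μ₀ a unit
    have hinv : μ₀ * μ₀ ^ (n - 1) = 1 := by
      rw [← pow_succ', Nat.sub_add_cancel (Nat.one_le_iff_ne_zero.mpr hn0), hμn]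
    set μu : Λˣ := Units.mkOfMulEqOne μ₀ (μ₀ ^ (n - 1)) hinv with hμu
    have hμuval : (μu : Λ) = μ₀ := rfl
    -- the functional
    set φ : M →ₗ[Λ] Λ := ((v : V) : M →ₗ[Λ] Λ) with hφdef
    have hφV : φ ∈ V := (v : V).2
    have hφ0 : φ ≠ 0 := fun h => hv0 (Subtype.ext h)
    have hμstep : ∀ m, φ (ρ g₀ m) = (μu : Λ) * φ m := by
      intro m
      have h2 := congrArg (fun x : V => ((x : V) : M →ₗ[Λ] Λ) m) hTv
      rw [← hTapply (v : V) m]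
      rw [h2, hμuval]
      rfl
    -- a vector where φ takes value 1
    obtain ⟨m₁, hm₁⟩ : ∃ m, φ m ≠ 0 := by
      by_contra hc
      push_neg at hc
      exact hφ0 (LinearMap.ext fun m => by rw [hc m, LinearMap.zero_apply])
    set m₀ : M := (φ m₁)⁻¹ • m₁ with hm₀def
    have hφm₀ : φ m₀ = 1 := by
      rw [hm₀def, map_smul, smul_eq_mul, inv_mul_cancel₀ hm₁]
    have hsurj : Function.Surjective φ := by
      intro x
      exact ⟨x • m₀, by rw [map_smul, smul_eq_mul, hφm₀, mul_one]⟩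
    -- the character on G
    have hmainφ := main φ hφV μu hμstep
    let c : G →* Λ :=
      { toFun := fun g => φ (ρ g m₀)
        map_one' := by
          show φ (ρ (1 : G) m₀) = 1
          rw [map_one, Module.End.one_apply, hφm₀]
        map_mul' := fun a b => by
          obtain ⟨k, hk⟩ := hmainφ a
          simp only [map_mul, Module.End.mul_apply]
          rw [hk (ρ b m₀), hk m₀, hφm₀, mul_one] }
    have hcval : ∀ g : G, c g = φ (ρ g m₀) := fun g => rfl
    have hker : H ≤ c.toHomUnits.ker := by
      intro h hh
      have h1 : c h = 1 := by rw [hcval, hφV ⟨h, hh⟩ m₀, hφm₀]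
      have : ((c.toHomUnits h : Λˣ) : Λ) = 1 := by
        rw [MonoidHom.coe_toHomUnits, h1]
      exact Units.ext this
    refine ⟨QuotientGroup.lift H c.toHomUnits hker, ?_, φ, hsurj, ?_⟩
    · intro hχ
      have h1 : ((QuotientGroup.lift H c.toHomUnits hker (QuotientGroup.mk g₀) : Λˣ) : Λ) = 1 := by
        rw [hχ]; rfl
      rw [QuotientGroup.lift_mk, MonoidHom.coe_toHomUnits, hcval, hμstep, hφm₀, mul_one] at h1
      rw [hμuval] at h1
      exact hμ1 h1
    · intro g m
      obtain ⟨k, hk⟩ := hmainφ g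
      have h1 : ((QuotientGroup.lift H c.toHomUnits hker (QuotientGroup.mk g) : Λˣ) : Λ)
          = ((μu ^ k : Λˣ) : Λ) := by
        rw [QuotientGroup.lift_mk, MonoidHom.coe_toHomUnits, hcval, hk m₀, hφm₀, mul_one]
      rw [hk m, h1]
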